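/- Fix a real number λ ≠ 0. For every integer n ≥ 0 and every real x, the ordinary falling factorial satisfies (x)_n = Σ_{m=0}^{n} G_{m,λ}(x) S_{2,λ}(n,m). -/

import Mathlib

open Finset

/-- The degenerate falling factorial `(x)_{n,λ} = x(x−λ)⋯(x−(n−1)λ)`;
for `lam = 1` it is the ordinary falling factorial `(x)_n`. -/
noncomputable def dff (lam : ℝ) (n : ℕ) (x : ℝ) : ℝ :=
  ∏ i ∈ Finset.range n, (x - i * lam)

/-- The degenerate exponential `e_λ^x(t) = Σ_{n≥0} (x)_{n,λ} t^n/n!`. -/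
noncomputable def degExp (lam x : ℝ) : PowerSeries ℝ :=
  PowerSeries.mk fun n => dff lam n x / n.factorial

/-- The degenerate logarithm `log_λ(1+t) = Σ_{n≥1} λ^{n−1}(1)_{n,1/λ} t^n/n!`. -/
noncomputable def degLog (lam : ℝ) : PowerSeries ℝ :=
  PowerSeries.mk fun n =>
    if n = 0 then 0 else lam ^ (n - 1) * dff (1 / lam) n 1 / n.factorial

/-- Composition `f(g(t))` of formal power series (valid definition of composition
when `g` has zero constant term, as in all uses below). -/
noncomputable def pscomp (f g : PowerSeries ℝ) : PowerSeries ℝ :=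
  PowerSeries.mk fun n =>
    ∑ k ∈ Finset.range (n + 1), (PowerSeries.coeff (R := ℝ) k f) * (PowerSeries.coeff (R := ℝ) n (g ^ k))

open PowerSeries Polynomial

lemma coeff_pscomp (f g : PowerSeries ℝ) (n : ℕ) :
    PowerSeries.coeff (R := ℝ) n (pscomp f g) =
      ∑ k ∈ Finset.range (n + 1), (PowerSeries.coeff (R := ℝ) k f) * (PowerSeries.coeff (R := ℝ) n (g ^ k)) := by
  simp [pscomp]

lemma coeff_pow_eq_zero {g : PowerSeries ℝ} (hg : PowerSeries.constantCoeff (R := ℝ) g = 0)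
    {n k : ℕ} (h : n < k) : PowerSeries.coeff (R := ℝ) n (g ^ k) = 0 := by
  have h1 : (PowerSeries.X : PowerSeries ℝ) ^ k ∣ g ^ k :=
    pow_dvd_pow_of_dvd (PowerSeries.X_dvd_iff.mpr hg) k
  exact (PowerSeries.X_pow_dvd_iff.mp h1) n h

lemma coeff_aeval {g : PowerSeries ℝ} (hg : PowerSeries.constantCoeff (R := ℝ) g = 0)
    (p : Polynomial ℝ) (n : ℕ) :
    PowerSeries.coeff (R := ℝ) n (Polynomial.aeval g p) =
      ∑ k ∈ Finset.range (n + 1), p.coeff k * PowerSeries.coeff (R := ℝ) n (g ^ k) := by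
  rw [Polynomial.aeval_eq_sum_range, map_sum]
  have h1 : ∀ k ∈ Finset.range (p.natDegree + 1),
      PowerSeries.coeff (R := ℝ) n (p.coeff k • g ^ k) = p.coeff k * PowerSeries.coeff (R := ℝ) n (g ^ k) := by
    intro k _; rw [LinearMap.map_smul, smul_eq_mul]
  rw [Finset.sum_congr rfl h1]
  set N := max (p.natDegree + 1) (n + 1) with hN
  rw [show (∑ k ∈ Finset.range (p.natDegree + 1), p.coeff k * PowerSeries.coeff (R := ℝ) n (g ^ k))
      = ∑ k ∈ Finset.range N, p.coeff k * PowerSeries.coeff (R := ℝ) n (g ^ k) from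
    Finset.sum_subset (Finset.range_subset_range.mpr (le_max_left _ _)) (by
      intro k _ hk
      rw [Polynomial.coeff_eq_zero_of_natDegree_lt (by simp at hk; omega), zero_mul])]
  refine (Finset.sum_subset (Finset.range_subset_range.mpr (le_max_right _ _)) ?_).symm
  intro k _ hk
  rw [coeff_pow_eq_zero hg (by simp at hk; omega), mul_zero]

lemma coeff_pscomp_eq_aeval {g : PowerSeries ℝ} (hg : PowerSeries.constantCoeff (R := ℝ) g = 0)
    (f : PowerSeries ℝ) {n N : ℕ} (h : n < N) :
    PowerSeries.coeff (R := ℝ) n (pscomp f g) =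
      PowerSeries.coeff (R := ℝ) n (Polynomial.aeval g (PowerSeries.trunc N f)) := by
  rw [coeff_aeval hg, coeff_pscomp]
  refine Finset.sum_congr rfl fun k hk => ?_
  rw [PowerSeries.coeff_trunc]
  simp at hk
  rw [if_pos (by omega)]

lemma coeff_aeval_congr {g : PowerSeries ℝ} (hg : PowerSeries.constantCoeff (R := ℝ) g = 0)
    {p q : Polynomial ℝ} {n : ℕ} (h : ∀ k ≤ n, p.coeff k = q.coeff k) :
    PowerSeries.coeff (R := ℝ) n (Polynomial.aeval g p) = PowerSeries.coeff (R := ℝ) n (Polynomial.aeval g q) := by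
  rw [coeff_aeval hg, coeff_aeval hg]
  refine Finset.sum_congr rfl fun k hk => ?_
  simp at hk
  rw [h k (by omega)]

lemma pscomp_mul (a b g : PowerSeries ℝ) (hg : PowerSeries.constantCoeff (R := ℝ) g = 0) :
    pscomp (a * b) g = pscomp a g * pscomp b g := by
  ext n
  rw [coeff_pscomp_eq_aeval hg _ (Nat.lt_succ_self n)]
  rw [coeff_aeval_congr hg (q := PowerSeries.trunc (n+1) a * PowerSeries.trunc (n+1) b)
    (fun k hk => by
      rw [PowerSeries.coeff_trunc, if_pos (by omega), ← Polynomial.coeff_coe,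
        Polynomial.coe_mul]
      exact PowerSeries.coeff_mul_eq_coeff_trunc_mul_trunc a b (show k < n+1 by omega))]
  rw [map_mul, PowerSeries.coeff_mul, PowerSeries.coeff_mul]
  refine Finset.sum_congr rfl fun pq hpq => ?_
  rw [Finset.HasAntidiagonal.mem_antidiagonal] at hpq
  rw [← coeff_pscomp_eq_aeval hg a (by omega), ← coeff_pscomp_eq_aeval hg b (by omega)]

lemma pscomp_one (g : PowerSeries ℝ) : pscomp 1 g = 1 := by
  ext n
  rw [coeff_pscomp]
  rw [show ∑ k ∈ Finset.range (n + 1), (PowerSeries.coeff (R := ℝ) k 1) * (PowerSeries.coeff (R := ℝ) n (g ^ k))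
      = ∑ k ∈ Finset.range (n + 1),
        (if k = 0 then PowerSeries.coeff (R := ℝ) n ((1 : PowerSeries ℝ)) else 0) from
    Finset.sum_congr rfl fun k _ => by
      rcases eq_or_ne k 0 with rfl | hk
      · simp
      · simp [PowerSeries.coeff_one, hk]]
  rw [Finset.sum_ite_eq' (Finset.range (n+1)) 0]
  simp

lemma pscomp_pow (g h : PowerSeries ℝ) (hh : PowerSeries.constantCoeff (R := ℝ) h = 0) (k : ℕ) :
    pscomp (g ^ k) h = (pscomp g h) ^ k := by
  induction k with
  | zero => simpa using pscomp_one h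
  | succ k ih => rw [pow_succ, pow_succ, pscomp_mul _ _ _ hh, ih]

lemma pscomp_assoc (f g h : PowerSeries ℝ) (hgc : PowerSeries.constantCoeff (R := ℝ) g = 0)
    (hhc : PowerSeries.constantCoeff (R := ℝ) h = 0) :
    pscomp f (pscomp g h) = pscomp (pscomp f g) h := by
  ext n
  rw [coeff_pscomp, coeff_pscomp]
  calc ∑ k ∈ Finset.range (n+1),
        PowerSeries.coeff (R := ℝ) k f * PowerSeries.coeff (R := ℝ) n ((pscomp g h) ^ k)
      = ∑ k ∈ Finset.range (n+1), ∑ m ∈ Finset.range (n+1),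
          PowerSeries.coeff (R := ℝ) k f * (PowerSeries.coeff (R := ℝ) m (g ^ k) *
            PowerSeries.coeff (R := ℝ) n (h ^ m)) := by
        refine Finset.sum_congr rfl fun k _ => ?_
        rw [← pscomp_pow g h hhc, coeff_pscomp, Finset.mul_sum]
    _ = ∑ m ∈ Finset.range (n+1), (∑ k ∈ Finset.range (n+1),
          PowerSeries.coeff (R := ℝ) k f * PowerSeries.coeff (R := ℝ) m (g ^ k)) *
            PowerSeries.coeff (R := ℝ) n (h ^ m) := by
        rw [Finset.sum_comm]
        refine Finset.sum_congr rfl fun m _ => ?_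
        rw [Finset.sum_mul]
        refine Finset.sum_congr rfl fun k _ => by ring
    _ = ∑ m ∈ Finset.range (n+1),
          PowerSeries.coeff (R := ℝ) m (pscomp f g) * PowerSeries.coeff (R := ℝ) n (h ^ m) := by
        refine Finset.sum_congr rfl fun m hm => ?_
        simp only [Finset.mem_range] at hm
        rw [coeff_pscomp]
        congr 1
        refine (Finset.sum_subset (Finset.range_subset_range.mpr (by omega)) ?_).symm
        intro k _ hk
        simp only [Finset.mem_range, not_lt] at hk
        rw [coeff_pow_eq_zero hgc (by omega), mul_zero]

lemma constantCoeff_pscomp (f g : PowerSeries ℝ) :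
    PowerSeries.constantCoeff (R := ℝ) (pscomp f g) = PowerSeries.constantCoeff (R := ℝ) f := by
  rw [← PowerSeries.coeff_zero_eq_constantCoeff_apply, coeff_pscomp]
  simp

lemma derivativeFun_pow (g : PowerSeries ℝ) (k : ℕ) :
    PowerSeries.derivativeFun (g ^ k) =
      (k : PowerSeries ℝ) * g ^ (k - 1) * PowerSeries.derivativeFun g := by
  induction k with
  | zero => simp [PowerSeries.derivativeFun_one]
  | succ k ih =>
    rw [pow_succ, PowerSeries.derivativeFun_mul, ih, Nat.add_sub_cancel]
    cases k with
    | zero => simp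
    | succ m =>
      rw [Nat.succ_sub_one]
      push_cast
      simp only [pow_succ, smul_eq_mul]
      ring

lemma coeff_derivativeFun' (f : PowerSeries ℝ) (n : ℕ) :
    PowerSeries.coeff (R := ℝ) n (PowerSeries.derivativeFun f) =
      PowerSeries.coeff (R := ℝ) (n + 1) f * (n + 1) :=
  PowerSeries.coeff_derivative f n

lemma aeval_derivative (g : PowerSeries ℝ) (p : Polynomial ℝ) :
    PowerSeries.derivativeFun (Polynomial.aeval g p) =
      Polynomial.aeval g (Polynomial.derivative p) * PowerSeries.derivativeFun g := by
  induction p using Polynomial.induction_on' with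
  | add p q hp hq =>
      simp only [map_add, PowerSeries.derivativeFun_add, hp, hq, add_mul]
  | monomial k c =>
      rw [Polynomial.aeval_monomial, Polynomial.derivative_monomial, Polynomial.aeval_monomial]
      rw [PowerSeries.derivativeFun_mul, derivativeFun_pow]
      have hc : PowerSeries.derivativeFun ((algebraMap ℝ (PowerSeries ℝ)) c) = 0 := by
        exact PowerSeries.derivative_C (R := ℝ) (r := c)
      rw [hc]
      simp only [smul_eq_mul, Algebra.smul_def, map_mul, map_natCast, mul_zero, add_zero]
      ring

-- chain rule
lemma pscomp_derivativeFun (f g : PowerSeries ℝ) (hg : PowerSeries.constantCoeff (R := ℝ) g = 0) :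
    PowerSeries.derivativeFun (pscomp f g) =
      pscomp (PowerSeries.derivativeFun f) g * PowerSeries.derivativeFun g := by
  ext n
  rw [coeff_derivativeFun',
    coeff_pscomp_eq_aeval hg f (show n + 1 < n + 2 by omega),
    ← coeff_derivativeFun', aeval_derivative,
    show Polynomial.derivative (PowerSeries.trunc (n+2) f)
        = PowerSeries.trunc (n+1) (PowerSeries.derivativeFun f) from
      (PowerSeries.trunc_derivativeFun f (n+1)).symm,
    PowerSeries.coeff_mul, PowerSeries.coeff_mul]
  refine Finset.sum_congr rfl fun pq hpq => ?_
  rw [Finset.HasAntidiagonal.mem_antidiagonal] at hpq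
  rw [← coeff_pscomp_eq_aeval hg _ (show pq.1 < n + 1 by omega)]

lemma pscomp_add (a b g : PowerSeries ℝ) : pscomp (a + b) g = pscomp a g + pscomp b g := by
  ext n
  simp only [coeff_pscomp, map_add, add_mul, Finset.sum_add_distrib]

lemma pscomp_smul (r : ℝ) (f g : PowerSeries ℝ) : pscomp (r • f) g = r • pscomp f g := by
  ext n
  simp only [coeff_pscomp, LinearMap.map_smul, smul_eq_mul, Finset.mul_sum, mul_assoc]

lemma pscomp_X (g : PowerSeries ℝ) (hg : PowerSeries.constantCoeff (R := ℝ) g = 0) :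
    pscomp PowerSeries.X g = g := by
  ext n
  rw [coeff_pscomp]
  rw [show (∑ k ∈ Finset.range (n + 1),
        PowerSeries.coeff (R := ℝ) k PowerSeries.X * PowerSeries.coeff (R := ℝ) n (g ^ k))
      = ∑ k ∈ Finset.range (n + 1), (if k = 1 then PowerSeries.coeff (R := ℝ) n g else 0) from
    Finset.sum_congr rfl fun k _ => by
      rcases eq_or_ne k 1 with rfl | hk
      · simp [PowerSeries.coeff_X]
      · simp [PowerSeries.coeff_X, hk]]
  rw [Finset.sum_ite_eq' (Finset.range (n+1)) 1]
  rcases Nat.eq_zero_or_pos n with rfl | hn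
  · rw [if_neg (by simp), PowerSeries.coeff_zero_eq_constantCoeff_apply, hg]
  · rw [if_pos (Finset.mem_range.mpr (by omega))]

-- dff recurrence
lemma dff_succ (lam : ℝ) (n : ℕ) (x : ℝ) :
    dff lam (n+1) x = dff lam n x * (x - n * lam) := Finset.prod_range_succ _ _

lemma dff_zero (lam x : ℝ) : dff lam 0 x = 1 := rfl

lemma coeff_degLog_zero (lam : ℝ) : PowerSeries.constantCoeff (R := ℝ) (degLog lam) = 0 := by
  rw [← PowerSeries.coeff_zero_eq_constantCoeff_apply, degLog, PowerSeries.coeff_mk]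
  simp

-- the ODE for degExp : (1 + mu*X) * D(degExp mu x) = x * degExp mu x
lemma coeff_X_mul_derivativeFun (f : PowerSeries ℝ) (n : ℕ) :
    PowerSeries.coeff (R := ℝ) n (PowerSeries.X * PowerSeries.derivativeFun f)
      = n * PowerSeries.coeff (R := ℝ) n f := by
  cases n with
  | zero => simp
  | succ m =>
      rw [PowerSeries.coeff_succ_X_mul, coeff_derivativeFun']
      push_cast; ring

lemma ode_degExp (mu x : ℝ) :
    (1 + PowerSeries.C (R := ℝ) mu * PowerSeries.X) * PowerSeries.derivativeFun (degExp mu x)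
      = PowerSeries.C (R := ℝ) x * degExp mu x := by
  ext n
  rw [add_mul, one_mul, map_add, mul_assoc, PowerSeries.coeff_C_mul,
    PowerSeries.coeff_C_mul, coeff_X_mul_derivativeFun, coeff_derivativeFun']
  have h1 : PowerSeries.coeff (R := ℝ) (n+1) (degExp mu x) = dff mu (n+1) x / (n+1).factorial := by
    rw [degExp, PowerSeries.coeff_mk]
  have h2 : PowerSeries.coeff (R := ℝ) n (degExp mu x) = dff mu n x / n.factorial := by
    rw [degExp, PowerSeries.coeff_mk]
  rw [h1, h2, dff_succ, Nat.factorial_succ]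
  have hf : (n.factorial : ℝ) ≠ 0 := Nat.cast_ne_zero.mpr (Nat.factorial_ne_zero n)
  field_simp
  push_cast
  ring

lemma ode_degLog (lam : ℝ) (hlam : lam ≠ 0) :
    (1 + PowerSeries.X) * PowerSeries.derivativeFun (degLog lam)
      = 1 + PowerSeries.C (R := ℝ) lam * degLog lam := by
  ext n
  rw [add_mul, one_mul, map_add, coeff_X_mul_derivativeFun, coeff_derivativeFun',
    map_add, PowerSeries.coeff_C_mul]
  have hL : ∀ m : ℕ, PowerSeries.coeff (R := ℝ) m (degLog lam)
      = if m = 0 then 0 else lam ^ (m - 1) * dff (1/lam) m 1 / m.factorial := by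
    intro m; rw [degLog, PowerSeries.coeff_mk]
  cases n with
  | zero =>
      rw [hL 1, hL 0]
      simp [dff_succ, dff_zero, PowerSeries.coeff_one]
  | succ m =>
      rw [hL (m+2), hL (m+1)]
      rw [if_neg (by omega), if_neg (by omega), PowerSeries.coeff_one, if_neg (by omega)]
      have key : dff (1/lam) (m+2) 1 = dff (1/lam) (m+1) 1 * (1 - (m+1) * (1/lam)) := by
        have := dff_succ (1/lam) (m+1) 1
        push_cast at this ⊢
        convert this using 3
      rw [key, Nat.factorial_succ (m+1)]
      have hf : ((m+1).factorial : ℝ) ≠ 0 := Nat.cast_ne_zero.mpr (Nat.factorial_ne_zero _)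
      simp only [show m + 2 - 1 = m + 1 by omega, Nat.add_sub_cancel]
      field_simp
      push_cast
      ring

lemma pscomp_C (r : ℝ) (g : PowerSeries ℝ) : pscomp (PowerSeries.C (R := ℝ) r) g = PowerSeries.C (R := ℝ) r := by
  have h : PowerSeries.C (R := ℝ) r = r • (1 : PowerSeries ℝ) := by
    rw [PowerSeries.smul_eq_C_mul, mul_one]
  rw [h]
  ext n
  rw [coeff_pscomp]
  rw [show (∑ k ∈ Finset.range (n + 1),
        PowerSeries.coeff (R := ℝ) k (r • (1:PowerSeries ℝ)) * PowerSeries.coeff (R := ℝ) n (g ^ k))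
      = ∑ k ∈ Finset.range (n + 1),
        r * (PowerSeries.coeff (R := ℝ) k 1 * PowerSeries.coeff (R := ℝ) n (g ^ k)) from
    Finset.sum_congr rfl fun k _ => by
      rw [LinearMap.map_smul, smul_eq_mul, mul_assoc], ← Finset.mul_sum,
    ← coeff_pscomp, pscomp_one]
  rw [LinearMap.map_smul]
  simp

lemma ode_unique (x : ℝ) (F G : PowerSeries ℝ)
    (hF : (1 + PowerSeries.X) * PowerSeries.derivativeFun F = PowerSeries.C (R := ℝ) x * F)
    (hG : (1 + PowerSeries.X) * PowerSeries.derivativeFun G = PowerSeries.C (R := ℝ) x * G)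
    (h0 : PowerSeries.coeff (R := ℝ) 0 F = PowerSeries.coeff (R := ℝ) 0 G) : F = G := by
  ext n
  induction n with
  | zero => exact h0
  | succ n ih =>
    have eF := congrArg (PowerSeries.coeff (R := ℝ) n) hF
    have eG := congrArg (PowerSeries.coeff (R := ℝ) n) hG
    rw [add_mul, one_mul, map_add, coeff_X_mul_derivativeFun,
      coeff_derivativeFun', PowerSeries.coeff_C_mul] at eF eG
    rw [ih] at eF
    have hn : ((n:ℝ)+1) ≠ 0 := by positivity
    have h2 : PowerSeries.coeff (R := ℝ) (n+1) F * ((n:ℝ)+1)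
        = PowerSeries.coeff (R := ℝ) (n+1) G * ((n:ℝ)+1) := by linarith
    exact mul_right_cancel₀ hn h2

lemma keyB (lam x : ℝ) (hlam : lam ≠ 0) :
    pscomp (degExp lam x) (degLog lam) = degExp 1 x := by
  have hL0 := coeff_degLog_zero lam
  have hF : (1 + PowerSeries.X) * PowerSeries.derivativeFun (pscomp (degExp lam x) (degLog lam))
      = PowerSeries.C (R := ℝ) x * pscomp (degExp lam x) (degLog lam) := by
    rw [pscomp_derivativeFun _ _ hL0,
      show (1 + PowerSeries.X) *
          (pscomp (PowerSeries.derivativeFun (degExp lam x)) (degLog lam) *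
            PowerSeries.derivativeFun (degLog lam))
        = pscomp (PowerSeries.derivativeFun (degExp lam x)) (degLog lam) *
            ((1 + PowerSeries.X) * PowerSeries.derivativeFun (degLog lam)) by ring,
      ode_degLog lam hlam,
      show (1 : PowerSeries ℝ) + PowerSeries.C (R := ℝ) lam * degLog lam
        = pscomp (1 + PowerSeries.C (R := ℝ) lam * PowerSeries.X) (degLog lam) by
          rw [pscomp_add, pscomp_one, pscomp_mul _ _ _ hL0, pscomp_C, pscomp_X _ hL0],
      ← pscomp_mul _ _ _ hL0,
      mul_comm (PowerSeries.derivativeFun (degExp lam x)),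
      ode_degExp, pscomp_mul _ _ _ hL0, pscomp_C]
  have hG : (1 + PowerSeries.X) * PowerSeries.derivativeFun (degExp 1 x)
      = PowerSeries.C (R := ℝ) x * degExp 1 x := by
    have := ode_degExp 1 x
    rwa [map_one, one_mul] at this
  refine ode_unique x _ _ hF hG ?_
  rw [coeff_pscomp]
  rw [show (0:ℕ)+1 = 1 from rfl, Finset.range_one, Finset.sum_singleton, pow_zero]
  rw [degExp, degExp, PowerSeries.coeff_mk, PowerSeries.coeff_mk]
  norm_num [dff, PowerSeries.coeff_one]

/-- `s1 lam m k` : degenerate Stirling numbers of the first kind (coefficient form). -/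
noncomputable def s1 (lam : ℝ) (m k : ℕ) : ℝ :=
  m.factorial * PowerSeries.coeff (R := ℝ) m ((degLog lam) ^ k) / k.factorial

lemma s1_eq_zero (lam : ℝ) {m k : ℕ} (h : m < k) : s1 lam m k = 0 := by
  rw [s1, coeff_pow_eq_zero (coeff_degLog_zero lam) h, mul_zero, zero_div]

lemma F1 (lam : ℝ) (hlam : lam ≠ 0) (n : ℕ) (x : ℝ) :
    dff 1 n x = ∑ k ∈ Finset.range (n+1), s1 lam n k * dff lam k x := by
  have h := congrArg (PowerSeries.coeff (R := ℝ) n) (keyB lam x hlam)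
  rw [coeff_pscomp] at h
  have hA : ∀ k, PowerSeries.coeff (R := ℝ) k (degExp lam x) = dff lam k x / k.factorial := by
    intro k; rw [degExp, PowerSeries.coeff_mk]
  have hB : PowerSeries.coeff (R := ℝ) n (degExp 1 x) = dff 1 n x / n.factorial := by
    rw [degExp, PowerSeries.coeff_mk]
  rw [hB] at h
  have hf : (n.factorial : ℝ) ≠ 0 := Nat.cast_ne_zero.mpr (Nat.factorial_ne_zero n)
  have h2 : dff 1 n x = (n.factorial : ℝ) *
      ∑ k ∈ Finset.range (n+1),
        PowerSeries.coeff (R := ℝ) k (degExp lam x) * PowerSeries.coeff (R := ℝ) n ((degLog lam) ^ k) := by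
    rw [h]; field_simp
  rw [h2, Finset.mul_sum]
  refine Finset.sum_congr rfl fun k _ => ?_
  rw [hA, s1]
  ring

lemma F2 (lam : ℝ) (hlam : lam ≠ 0) (S2 : ℕ → ℕ → ℝ) (G : ℕ → ℝ → ℝ)
    (hG : ∀ x : ℝ, pscomp (degExp lam x) (pscomp (degLog lam) (degLog lam))
      = PowerSeries.mk (fun n => G n x / n.factorial)) (m : ℕ) (x : ℝ) :
    G m x = ∑ k ∈ Finset.range (m+1), s1 lam m k * dff 1 k x := by
  have hL0 := coeff_degLog_zero lam
  have h := hG x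
  rw [pscomp_assoc _ _ _ hL0 hL0, keyB lam x hlam] at h
  have h2 := congrArg (PowerSeries.coeff (R := ℝ) m) h
  rw [coeff_pscomp, PowerSeries.coeff_mk] at h2
  have hf : (m.factorial : ℝ) ≠ 0 := Nat.cast_ne_zero.mpr (Nat.factorial_ne_zero m)
  have h3 : G m x = (m.factorial : ℝ) *
      ∑ k ∈ Finset.range (m+1),
        PowerSeries.coeff (R := ℝ) k (degExp 1 x) * PowerSeries.coeff (R := ℝ) m ((degLog lam) ^ k) := by
    rw [h2]; field_simp
  rw [h3, Finset.mul_sum]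
  refine Finset.sum_congr rfl fun k _ => ?_
  rw [degExp, PowerSeries.coeff_mk, s1]
  ring

lemma dff_one_eq_descPochhammer (k : ℕ) (x : ℝ) :
    dff 1 k x = (descPochhammer ℝ k).eval x := by
  induction k with
  | zero => simp [dff]
  | succ k ih =>
      rw [dff_succ, descPochhammer_succ_eval, ih, mul_one]

lemma dff_linind : ∀ (N : ℕ) (c : ℕ → ℝ),
    (∀ x : ℝ, ∑ k ∈ Finset.range N, c k * dff 1 k x = 0) → ∀ k < N, c k = 0 := by
  intro N
  induction N with
  | zero => intro c _ k hk; omega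
  | succ N ih =>
    intro c h k hk
    set P : Polynomial ℝ := ∑ j ∈ Finset.range (N+1), Polynomial.C (c j) * descPochhammer ℝ j
      with hPdef
    have hP : P = 0 := by
      apply Polynomial.funext
      intro r
      rw [Polynomial.eval_zero, hPdef, Polynomial.eval_finset_sum]
      have := h r
      rw [← this]
      refine Finset.sum_congr rfl fun j _ => ?_
      rw [Polynomial.eval_mul, Polynomial.eval_C, dff_one_eq_descPochhammer]
    have hcN : c N = 0 := by
      have h2 := congrArg (fun p => Polynomial.coeff p N) hP
      simp only [hPdef, Polynomial.finset_sum_coeff, Polynomial.coeff_zero] at h2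
      rw [Finset.sum_range_succ] at h2
      have hz : ∀ j ∈ Finset.range N,
          (Polynomial.C (c j) * descPochhammer ℝ j).coeff N = 0 := by
        intro j hj
        simp only [Finset.mem_range] at hj
        rw [Polynomial.coeff_C_mul,
          Polynomial.coeff_eq_zero_of_natDegree_lt (by rw [descPochhammer_natDegree]; omega),
          mul_zero]
      rw [Finset.sum_eq_zero hz, zero_add, Polynomial.coeff_C_mul] at h2
      have hm : (descPochhammer ℝ N).coeff N = 1 := by
        have := (monic_descPochhammer ℝ N).coeff_natDegree
        rwa [descPochhammer_natDegree] at this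
      rw [hm, mul_one] at h2
      exact h2
    have h' : ∀ x : ℝ, ∑ j ∈ Finset.range N, c j * dff 1 j x = 0 := by
      intro x
      have := h x
      rw [Finset.sum_range_succ, hcN, zero_mul, add_zero] at this
      exact this
    rcases Nat.lt_or_ge k N with hk' | hk'
    · exact ih c h' k hk'
    · have : k = N := by omega
      rw [this]; exact hcN

theorem falling_factorial_via_gaenari (lam : ℝ) (hlam : lam ≠ 0)
    (S2 : ℕ → ℕ → ℝ) (G : ℕ → ℝ → ℝ)
    (hS2 : ∀ (n : ℕ) (x : ℝ), dff lam n x = ∑ k ∈ Finset.range (n + 1), S2 n k * dff 1 k x)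
    (hG : ∀ x : ℝ, pscomp (degExp lam x) (pscomp (degLog lam) (degLog lam)) = PowerSeries.mk (fun n => G n x / n.factorial))
    : ∀ (n : ℕ) (x : ℝ), dff 1 n x = ∑ m ∈ Finset.range (n + 1), G m x * S2 n m := by
  intro n x
  set T : ℕ → ℕ → ℝ := fun k j => if j ≤ k then S2 k j else 0 with hT
  -- Step 1:  ∑_k s1 i k * T k j = δ_{ij}  for i, j ≤ n
  have step1 : ∀ i ≤ n, ∀ j ≤ n,
      ∑ k ∈ Finset.range (n+1), s1 lam i k * T k j = (if i = j then (1:ℝ) else 0) := by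
    intro i hi j hj
    have hx : ∀ y : ℝ, dff 1 i y
        = ∑ j' ∈ Finset.range (n+1),
            (∑ k ∈ Finset.range (n+1), s1 lam i k * T k j') * dff 1 j' y := by
      intro y
      have e1 : dff 1 i y = ∑ k ∈ Finset.range (n+1), s1 lam i k * dff lam k y := by
        rw [F1 lam hlam i y]
        refine Finset.sum_subset (Finset.range_subset_range.mpr (by omega)) ?_
        intro k _ hk
        simp only [Finset.mem_range, not_lt] at hk
        rw [s1_eq_zero lam (show i < k by omega), zero_mul]
      have e2 : ∀ k ∈ Finset.range (n+1),
          dff lam k y = ∑ j' ∈ Finset.range (n+1), T k j' * dff 1 j' y := by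
        intro k hkmem
        have hkn : k < n + 1 := Finset.mem_range.mp hkmem
        rw [hS2 k y]
        have a1 : ∑ j' ∈ Finset.range (k+1), S2 k j' * dff 1 j' y
            = ∑ j' ∈ Finset.range (k+1), T k j' * dff 1 j' y :=
          Finset.sum_congr rfl fun j' hj' => by
            simp only [Finset.mem_range] at hj'
            rw [hT]
            simp only
            rw [if_pos (by omega)]
        rw [a1]
        refine Finset.sum_subset (Finset.range_subset_range.mpr (by omega)) ?_
        intro j' _ hj''
        simp only [Finset.mem_range, not_lt] at hj''
        have hz : T k j' = 0 := by
          rw [hT]; simp only; rw [if_neg (by omega)]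
        rw [hz, zero_mul]
      calc dff 1 i y = ∑ k ∈ Finset.range (n+1), s1 lam i k * dff lam k y := e1
        _ = ∑ k ∈ Finset.range (n+1), ∑ j' ∈ Finset.range (n+1),
              s1 lam i k * (T k j' * dff 1 j' y) := by
            refine Finset.sum_congr rfl fun k hk => ?_
            rw [e2 k hk, Finset.mul_sum]
        _ = ∑ j' ∈ Finset.range (n+1),
              (∑ k ∈ Finset.range (n+1), s1 lam i k * T k j') * dff 1 j' y := by
            rw [Finset.sum_comm]
            refine Finset.sum_congr rfl fun j' _ => ?_
            rw [Finset.sum_mul]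
            exact Finset.sum_congr rfl fun k _ => by ring
    set c : ℕ → ℝ := fun j' =>
      (∑ k ∈ Finset.range (n+1), s1 lam i k * T k j') - (if i = j' then 1 else 0) with hc
    have hzero : ∀ y : ℝ, ∑ j' ∈ Finset.range (n+1), c j' * dff 1 j' y = 0 := by
      intro y
      have hsplit : ∀ j' ∈ Finset.range (n+1), c j' * dff 1 j' y
          = (∑ k ∈ Finset.range (n+1), s1 lam i k * T k j') * dff 1 j' y
            - (if i = j' then 1 else 0) * dff 1 j' y := by
        intro j' _
        rw [hc]; ring
      rw [Finset.sum_congr rfl hsplit, Finset.sum_sub_distrib, ← hx y]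
      have hdelta : ∑ j' ∈ Finset.range (n+1), (if i = j' then (1:ℝ) else 0) * dff 1 j' y
          = dff 1 i y := by
        rw [Finset.sum_congr rfl (fun j' _ => by
          rw [show (if i = j' then (1:ℝ) else 0) * dff 1 j' y
            = (if i = j' then dff 1 j' y else 0) by split <;> simp_all])]
        rw [Finset.sum_ite_eq (Finset.range (n+1)) i (fun j' => dff 1 j' y),
          if_pos (Finset.mem_range.mpr (by omega))]
      rw [hdelta, sub_self]
    have := dff_linind (n+1) c hzero j (by omega)
    rw [hc] at this
    simp only at this
    linarith [this]
  -- Step 2: matrix inversion gives  ∑_m T n m * s1 m j = δ_{nj}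
  have step2 : ∀ j ≤ n,
      ∑ m ∈ Finset.range (n+1), T n m * s1 lam m j = (if n = j then (1:ℝ) else 0) := by
    have AB : (Matrix.of fun i k : Fin (n+1) => s1 lam i k)
        * (Matrix.of fun k j : Fin (n+1) => T k j) = 1 := by
      ext i j
      rw [Matrix.mul_apply, Matrix.one_apply]
      simp only [Matrix.of_apply]
      have h1 := step1 i (by omega) j (by omega)
      rw [← Fin.sum_univ_eq_sum_range (fun k => s1 lam i k * T k j) (n+1)] at h1
      rw [h1]
      congr 1
      simp [Fin.ext_iff]
    have BA := mul_eq_one_comm.mp AB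
    intro j hj
    have h2 := congrFun (congrFun BA ⟨n, by omega⟩) ⟨j, by omega⟩
    rw [Matrix.mul_apply, Matrix.one_apply] at h2
    simp only [Matrix.of_apply] at h2
    rw [← Fin.sum_univ_eq_sum_range (fun m => T n m * s1 lam m j) (n+1)]
    rw [h2]
    congr 1
    simp [Fin.ext_iff]
  -- Final computation
  have main : ∑ m ∈ Finset.range (n+1), G m x * S2 n m
      = ∑ k ∈ Finset.range (n+1),
          (∑ m ∈ Finset.range (n+1), T n m * s1 lam m k) * dff 1 k x := by
    calc ∑ m ∈ Finset.range (n+1), G m x * S2 n m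
        = ∑ m ∈ Finset.range (n+1), ∑ k ∈ Finset.range (n+1),
            T n m * (s1 lam m k * dff 1 k x) := by
          refine Finset.sum_congr rfl fun m hm => ?_
          simp only [Finset.mem_range] at hm
          have hGm : G m x = ∑ k ∈ Finset.range (n+1), s1 lam m k * dff 1 k x := by
            rw [F2 lam hlam S2 G hG m x]
            refine Finset.sum_subset (Finset.range_subset_range.mpr (by omega)) ?_
            intro k _ hk
            simp only [Finset.mem_range, not_lt] at hk
            rw [s1_eq_zero lam (show m < k by omega), zero_mul]
          have hTm : T n m = S2 n m := by
            rw [hT]; simp only; rw [if_pos (by omega)]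
          rw [hGm, ← hTm, Finset.sum_mul]
          exact Finset.sum_congr rfl fun k _ => by ring
      _ = ∑ k ∈ Finset.range (n+1),
            (∑ m ∈ Finset.range (n+1), T n m * s1 lam m k) * dff 1 k x := by
          rw [Finset.sum_comm]
          refine Finset.sum_congr rfl fun k _ => ?_
          rw [Finset.sum_mul]
          exact Finset.sum_congr rfl fun m _ => by ring
  rw [main, Finset.sum_congr rfl (fun k hk => by
    rw [step2 k (by simp only [Finset.mem_range] at hk; omega)])]
  rw [Finset.sum_congr rfl (fun k _ => by
    rw [show (if n = k then (1:ℝ) else 0) * dff 1 k x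
      = (if n = k then dff 1 k x else 0) by split <;> simp_all])]
  rw [Finset.sum_ite_eq (Finset.range (n+1)) n (fun k => dff 1 k x),
    if_pos (Finset.mem_range.mpr (by omega))]
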